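/- Every subloop of a Cayley-Dickson loop Q_n has order 2^m for some m ≤ n+1; more generally, any n elements of a Cayley-Dickson loop generate a subloop of size 2^k with k ≤ n+1. -/

import Mathlib

/-- The underlying set of the Cayley-Dickson loop `Q n`:
`Q 0 = {±1}` (encoded as `Bool`, `false = 1`, `true = -1`) and `Q (n+1) = Q n × Bool`,
an element `(x, b)` encoding `(x, 0)` if `b = false` and `(x, 1)` if `b = true`. -/
def Q : ℕ → Type
  | 0 => Bool
  | n+1 => Q n × Bool

namespace Q

def one : ∀ n, Q n
  | 0 => false
  | n+1 => (one n, false)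

def neg : ∀ n, Q n → Q n
  | 0, x => !x
  | n+1, (x, b) => (neg n x, b)

def conj : ∀ n, Q n → Q n
  | 0, x => x
  | n+1, (x, false) => (conj n x, false)
  | n+1, (x, true) => (neg n x, true)

/-- Cayley-Dickson doubling multiplication restricted to the loop:
`(x,0)(y,0) = (xy,0)`, `(x,0)(y,1) = (yx,1)`, `(x,1)(y,0) = (xy*,1)`, `(x,1)(y,1) = (-y*x,0)`. -/
def mul : ∀ n, Q n → Q n → Q n
  | 0, x, y => xor x y
  | n+1, (x, false), (y, false) => (mul n x y, false)
  | n+1, (x, false), (y, true)  => (mul n y x, true)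
  | n+1, (x, true),  (y, false) => (mul n x (conj n y), true)
  | n+1, (x, true),  (y, true)  => (neg n (mul n (conj n y) x), false)

instance (n : ℕ) : One (Q n) := ⟨one n⟩
instance (n : ℕ) : Neg (Q n) := ⟨neg n⟩
instance (n : ℕ) : Mul (Q n) := ⟨mul n⟩
instance (n : ℕ) : Star (Q n) := ⟨conj n⟩
/-- In `Q n` the inverse of `x` is its conjugate `x*`. -/
instance (n : ℕ) : Inv (Q n) := ⟨conj n⟩

instance instDecEq : ∀ n, DecidableEq (Q n)
  | 0 => inferInstanceAs (DecidableEq Bool)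
  | n+1 => letI := instDecEq n; inferInstanceAs (DecidableEq (Q n × Bool))

instance instFintype : ∀ n, Fintype (Q n)
  | 0 => inferInstanceAs (Fintype Bool)
  | n+1 => letI := instFintype n; inferInstanceAs (Fintype (Q n × Bool))

/-- Powers in `Q n` (well defined by diassociativity). -/
def pow {n : ℕ} (x : Q n) : ℕ → Q n
  | 0 => 1
  | k+1 => x * pow x k

/-- The embedding `x ↦ (x, 0)` of `Q n` into `Q (n+1)`. -/
def up {n : ℕ} (x : Q n) : Q (n+1) := (x, false)

/-- The map `x ↦ (x, 1)` from `Q n` into `Q (n+1)`. -/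
def up1 {n : ℕ} (x : Q n) : Q (n+1) := (x, true)

/-- The commutator `[x,y]`, defined by `xy = (yx)[x,y]`. -/
def comm {n : ℕ} (x y : Q n) : Q n := (y * x)⁻¹ * (x * y)

/-- The associator `[x,y,z]`, defined by `(xy)z = (x(yz))[x,y,z]`. -/
def assoc {n : ℕ} (x y z : Q n) : Q n := (x * (y * z))⁻¹ * ((x * y) * z)

/-- A subloop of the Cayley-Dickson loop `Q n`: a subset containing `1` and closed
under multiplication and inverses (= conjugates). -/
structure Subloop (n : ℕ) where
  carrier : Set (Q n)
  one_mem : (1 : Q n) ∈ carrier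
  mul_mem : ∀ ⦃x y : Q n⦄, x ∈ carrier → y ∈ carrier → x * y ∈ carrier
  inv_mem : ∀ ⦃x : Q n⦄, x ∈ carrier → x⁻¹ ∈ carrier

/-- The subloop of `Q n` generated by a set `s`. -/
def closure (n : ℕ) (s : Set (Q n)) : Set (Q n) :=
  ⋂₀ {t : Set (Q n) | s ⊆ t ∧ (1 : Q n) ∈ t ∧
      (∀ x ∈ t, ∀ y ∈ t, x * y ∈ t) ∧ (∀ x ∈ t, x⁻¹ ∈ t)}

end Q


namespace Q

theorem pair_eq_iff {n : ℕ} {x y : Q n} {a b : Bool} :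
    @Eq (Q (n+1)) (x, a) (y, b) ↔ x = y ∧ a = b := Prod.ext_iff

theorem neg_neg : ∀ n (x : Q n), neg n (neg n x) = x
  | 0, x => by cases x <;> rfl
  | n+1, (x, b) => by simp [neg, neg_neg n x] <;> rfl

theorem conj_neg : ∀ n (x : Q n), conj n (neg n x) = neg n (conj n x)
  | 0, x => rfl
  | n+1, (x, false) => by simp [neg, conj, conj_neg n x] <;> rfl
  | n+1, (x, true) => by simp [neg, conj] <;> rfl

theorem conj_one : ∀ n, conj n (one n) = one n
  | 0 => rfl
  | n+1 => by simp [one, conj, conj_one n] <;> rfl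

theorem negmul : ∀ n (x y : Q n), mul n (neg n x) y = neg n (mul n x y) ∧
    mul n x (neg n y) = neg n (mul n x y)
  | 0, x, y => by constructor <;> cases x <;> cases y <;> rfl
  | n+1, (x, false), (y, false) => by
      simp [neg, mul, (negmul n x y).1, (negmul n x y).2] <;> rfl
  | n+1, (x, false), (y, true) => by
      simp [neg, mul, (negmul n y x).1, (negmul n y x).2] <;> rfl
  | n+1, (x, true), (y, false) => by
      simp [neg, mul, conj_neg, (negmul n x (conj n y)).1, (negmul n x (conj n y)).2] <;> rfl
  | n+1, (x, true), (y, true) => by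
      simp [neg, mul, conj_neg, (negmul n (conj n y) x).1, (negmul n (conj n y) x).2] <;> rfl

theorem neg_mul (n) (x y : Q n) : mul n (neg n x) y = neg n (mul n x y) := (negmul n x y).1
theorem mul_neg (n) (x y : Q n) : mul n x (neg n y) = neg n (mul n x y) := (negmul n x y).2

theorem conj_mul_self : ∀ n (x : Q n), mul n (conj n x) x = one n
  | 0, x => by cases x <;> rfl
  | n+1, (x, false) => by simp [conj, mul, one, conj_mul_self n x] <;> rfl
  | n+1, (x, true) => by simp [conj, mul, one, mul_neg, conj_mul_self n x, neg_neg] <;> rfl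

theorem mul_one' : ∀ n (x : Q n), mul n x (one n) = x
  | 0, x => by cases x <;> rfl
  | n+1, (x, false) => by simp [one, mul, mul_one' n x] <;> rfl
  | n+1, (x, true) => by simp [one, mul, conj_one, mul_one' n x] <;> rfl

theorem neg_one_mul' : ∀ n (x : Q n), mul n (neg n (one n)) x = neg n x
  | 0, x => by cases x <;> rfl
  | n+1, (x, false) => by simp [one, neg, mul, neg_one_mul' n x] <;> rfl
  | n+1, (x, true) => by simp [one, neg, mul, mul_neg, mul_one' n x] <;> rfl

theorem sq_eq : ∀ n (x : Q n), mul n x x = one n ∨ mul n x x = neg n (one n)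
  | 0, x => by cases x <;> simp [mul, one, pair_eq_iff] <;> exact Or.inl rfl
  | n+1, (x, false) => by
      rcases sq_eq n x with h | h <;> simp [mul, one, neg, h]
      · exact Or.inl rfl
      · exact Or.inr rfl
  | n+1, (x, true) => by simp [mul, one, neg, conj_mul_self] <;> exact Or.inr rfl

theorem neg_one_ne_one : ∀ n, neg n (one n) ≠ one n
  | 0 => by simp [neg, one] <;> exact fun h => Bool.noConfusion h
  | n+1 => by simp [neg, one, pair_eq_iff, Prod.mk.injEq, neg_one_ne_one n] <;>
      exact fun h => neg_one_ne_one n (congrArg Prod.fst h)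

theorem sq_eq_one : ∀ n (x : Q n), mul n x x = one n → x = one n ∨ x = neg n (one n)
  | 0, x => by cases x <;> simp [mul, one, neg] <;> exact fun _ => rfl
  | n+1, (x, false) => by
      simp only [mul, one, neg, pair_eq_iff, and_true]
      exact fun h => (sq_eq_one n x h).imp (by simp +contextual) (by simp +contextual)
  | n+1, (x, true) => by
      simp only [mul, one, conj_mul_self, pair_eq_iff, and_true]
      exact fun h => absurd h (neg_one_ne_one n)

/-- coordinate vector (forgetting the sign) -/
def pi : ∀ n, Q n → (Fin n → ZMod 2)
  | 0, _ => ![]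
  | n+1, (x, b) => Fin.cons (if b then 1 else 0) (pi n x)

/-- the sign bit -/
def sign : ∀ n, Q n → Bool
  | 0, x => x
  | n+1, (x, _) => sign n x

theorem cons_add_cons {n : ℕ} (a b : ZMod 2) (v w : Fin n → ZMod 2) :
    (Fin.cons a v : Fin (n+1) → ZMod 2) + Fin.cons b w = Fin.cons (a + b) (v + w) := by
  funext i
  refine Fin.cases ?_ ?_ i <;> simp

theorem cons_inj {n : ℕ} {a b : ZMod 2} {v w : Fin n → ZMod 2}
    (h : (Fin.cons a v : Fin (n+1) → ZMod 2) = Fin.cons b w) : a = b ∧ v = w := by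
  constructor
  · simpa using congrFun h 0
  · funext i; simpa using congrFun h i.succ

theorem pi_neg : ∀ n (x : Q n), pi n (neg n x) = pi n x
  | 0, _ => rfl
  | n+1, (x, b) => by simp [pi, neg, pi_neg n x]

theorem pi_conj : ∀ n (x : Q n), pi n (conj n x) = pi n x
  | 0, _ => rfl
  | n+1, (x, false) => by simp [pi, conj, pi_conj n x]
  | n+1, (x, true) => by simp [pi, conj, pi_neg n x]

theorem pi_one : ∀ n, pi n (one n) = 0
  | 0 => by funext i; exact i.elim0
  | n+1 => by
      simp only [pi, one, pi_one n]
      funext i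
      refine Fin.cases ?_ ?_ i <;> simp

theorem pi_mul : ∀ n (x y : Q n), pi n (mul n x y) = pi n x + pi n y
  | 0, _, _ => by funext i; exact i.elim0
  | n+1, (x, false), (y, false) => by
      simp [pi, mul, pi_mul n x y, cons_add_cons]
  | n+1, (x, false), (y, true) => by
      simp [pi, mul, pi_mul n y x, cons_add_cons, add_comm]
  | n+1, (x, true), (y, false) => by
      simp [pi, mul, pi_mul n x (conj n y), cons_add_cons, pi_conj]
  | n+1, (x, true), (y, true) => by
      have : (1 : ZMod 2) + 1 = 0 := rfl
      simp [pi, mul, pi_neg, pi_mul n (conj n y) x, cons_add_cons, pi_conj, this, add_comm]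

theorem sign_neg : ∀ n (x : Q n), sign n (neg n x) = !(sign n x)
  | 0, x => rfl
  | n+1, (x, b) => by simp [sign, neg, sign_neg n x]

theorem fiber : ∀ n (x y : Q n), pi n x = pi n y → x = y ∨ x = neg n y
  | 0, x, y, _ => by cases x <;> cases y <;> simp [neg] <;> rfl
  | n+1, (x, b), (y, c), h => by
      simp only [pi] at h
      obtain ⟨h1, h2⟩ := cons_inj h
      have hbc : b = c := by cases b <;> cases c <;> simp_all
      subst hbc
      refine (fiber n x y h2).imp ?_ ?_ <;> intro h3 <;> simp [neg, pair_eq_iff, h3]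

theorem eq_of_pi_sign {n : ℕ} {x y : Q n} (h1 : pi n x = pi n y) (h2 : sign n x = sign n y) :
    x = y := by
  rcases fiber n x y h1 with h | h
  · exact h
  · subst h; rw [sign_neg] at h2; simp at h2

theorem ext_injective (n : ℕ) :
    Function.Injective (fun x : Q n => (pi n x, sign n x)) := by
  intro x y h
  exact eq_of_pi_sign (congrArg Prod.fst h) (congrArg Prod.snd h)

section main
variable {n : ℕ} {S : Set (Q n)}

theorem eq_singleton_of_neg_one_not_mem (h1 : one n ∈ S)
    (hm : ∀ x ∈ S, ∀ y ∈ S, mul n x y ∈ S)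
    (hneg : neg n (one n) ∉ S) : S = {one n} := by
  ext x
  simp only [Set.mem_singleton_iff]
  constructor
  · intro hx
    have hsq := hm x hx x hx
    rcases sq_eq n x with h | h
    · rcases sq_eq_one n x h with h' | h'
      · exact h'
      · exact absurd (h' ▸ hx) hneg
    · exact absurd (h ▸ hsq) hneg
  · rintro rfl; exact h1

/-- the image of a subloop under `pi` as an additive subgroup -/
def imageSubgroup (h1 : one n ∈ S) (hm : ∀ x ∈ S, ∀ y ∈ S, mul n x y ∈ S) :
    AddSubgroup (Fin n → ZMod 2) where
  carrier := pi n '' S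
  zero_mem' := ⟨one n, h1, pi_one n⟩
  add_mem' := by
    rintro a b ⟨x, hx, rfl⟩ ⟨y, hy, rfl⟩
    exact ⟨mul n x y, hm x hx y hy, pi_mul n x y⟩
  neg_mem' := by
    rintro a ⟨x, hx, rfl⟩
    refine ⟨x, hx, ?_⟩
    funext i
    rw [Pi.neg_apply, CharTwo.neg_eq]

theorem image_eq_prod (h1 : one n ∈ S) (hm : ∀ x ∈ S, ∀ y ∈ S, mul n x y ∈ S)
    (hneg : neg n (one n) ∈ S) :
    (fun x : Q n => (pi n x, sign n x)) '' S = (pi n '' S) ×ˢ (Set.univ : Set Bool) := by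
  ext ⟨v, b⟩
  simp only [Set.mem_image, Set.mem_prod, Set.mem_univ, and_true]
  constructor
  · rintro ⟨x, hx, h⟩
    exact ⟨x, hx, congrArg Prod.fst h⟩
  · rintro ⟨y, hy, rfl⟩
    by_cases hb : sign n y = b
    · exact ⟨y, hy, by simp [hb]⟩
    · refine ⟨neg n y, ?_, ?_⟩
      · have := hm _ hneg y hy
        rwa [neg_one_mul'] at this
      · have : (!(sign n y)) = b := by cases b <;> cases hsy : sign n y <;> simp_all
        simp [pi_neg, sign_neg, this]

theorem ncard_eq_two_mul (h1 : one n ∈ S) (hm : ∀ x ∈ S, ∀ y ∈ S, mul n x y ∈ S)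
    (hneg : neg n (one n) ∈ S) :
    S.ncard = 2 * (pi n '' S).ncard := by
  have h := Set.ncard_image_of_injective S (ext_injective n)
  rw [image_eq_prod h1 hm hneg] at h
  rw [← h, ← Nat.card_coe_set_eq, ← Nat.card_coe_set_eq]
  rw [Nat.card_congr (Equiv.Set.prod _ _), Nat.card_prod]
  have : Nat.card (Set.univ : Set Bool) = 2 := by
    rw [Nat.card_congr (Equiv.Set.univ Bool)]; simp [Nat.card_eq_fintype_card]
  rw [this, mul_comm]

theorem ncard_image_pow (h1 : one n ∈ S) (hm : ∀ x ∈ S, ∀ y ∈ S, mul n x y ∈ S) :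
    ∃ m ≤ n, (pi n '' S).ncard = 2 ^ m := by
  have hdvd : Nat.card (imageSubgroup h1 hm) ∣ Nat.card (Fin n → ZMod 2) :=
    AddSubgroup.card_addSubgroup_dvd_card _
  have hcard : Nat.card (Fin n → ZMod 2) = 2 ^ n := by
    rw [Nat.card_fun]; simp [Nat.card_eq_fintype_card]
  rw [hcard] at hdvd
  obtain ⟨m, hmn, hm2⟩ := (Nat.dvd_prime_pow Nat.prime_two).mp hdvd
  refine ⟨m, hmn, ?_⟩
  rw [← Nat.card_coe_set_eq]
  exact hm2

end main

theorem span_ncard_le {n : ℕ} (t : Finset (Fin n → ZMod 2)) :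
    ((Submodule.span (ZMod 2) (↑t : Set (Fin n → ZMod 2)) : Submodule (ZMod 2) _) :
      Set (Fin n → ZMod 2)).ncard ≤ 2 ^ t.card := by
  set W := Submodule.span (ZMod 2) (↑t : Set (Fin n → ZMod 2)) with hW
  haveI : Fintype ↥W := Fintype.ofFinite _
  have h1 : ((W : Set (Fin n → ZMod 2))).ncard = Fintype.card ↥W := by
    rw [← Nat.card_coe_set_eq,
      Nat.card_congr (Equiv.subtypeEquivRight (fun x => Iff.rfl) :
        {x // x ∈ (W : Set (Fin n → ZMod 2))} ≃ ↥W), Nat.card_eq_fintype_card]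
  have h2 : Fintype.card ↥W = 2 ^ Module.finrank (ZMod 2) ↥W := by
    have := Module.card_eq_pow_finrank (K := ZMod 2) (V := ↥W)
    rwa [ZMod.card] at this
  rw [h1, h2]
  exact Nat.pow_le_pow_right (by norm_num) (finrank_span_finset_le_card t)

theorem closure_ncard (n : ℕ) (s : Finset (Q n)) :
    ∃ j ≤ s.card + 1, (Q.closure n ↑s).ncard = 2 ^ j := by
  set C := Q.closure n ↑s with hC
  have h1 : one n ∈ C := fun t ht => ht.2.1
  have hm : ∀ x ∈ C, ∀ y ∈ C, mul n x y ∈ C :=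
    fun x hx y hy t ht => ht.2.2.1 x (hx t ht) y (hy t ht)
  by_cases hneg : neg n (one n) ∈ C
  · obtain ⟨m, hmn, hm2⟩ := ncard_image_pow h1 hm
    have hcard : C.ncard = 2 ^ (m + 1) := by
      rw [ncard_eq_two_mul h1 hm hneg, hm2, pow_succ, mul_comm]
    set W := Submodule.span (ZMod 2) (↑(s.image (pi n)) : Set (Fin n → ZMod 2)) with hW
    have hCW : C ⊆ pi n ⁻¹' (W : Set (Fin n → ZMod 2)) := by
      intro x hx
      refine hx _ ⟨?_, ?_, ?_, ?_⟩
      · intro y hy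
        exact Submodule.subset_span (by simpa using ⟨y, hy, rfl⟩)
      · show pi n (one n) ∈ W
        rw [pi_one]; exact W.zero_mem
      · intro a ha b hb
        show pi n (mul n a b) ∈ W
        rw [pi_mul]; exact W.add_mem ha hb
      · intro a ha
        show pi n (conj n a) ∈ W
        rw [pi_conj]; exact ha
    have himg : pi n '' C ⊆ (W : Set (Fin n → ZMod 2)) := by
      rintro v ⟨x, hx, rfl⟩; exact hCW hx
    have hle : (2 : ℕ) ^ m ≤ 2 ^ s.card := by
      calc (2:ℕ) ^ m = (pi n '' C).ncard := hm2.symm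
        _ ≤ ((W : Set (Fin n → ZMod 2))).ncard := Set.ncard_le_ncard himg (Set.toFinite _)
        _ ≤ 2 ^ (s.image (pi n)).card := span_ncard_le _
        _ ≤ 2 ^ s.card := Nat.pow_le_pow_right (by norm_num) Finset.card_image_le
    have hms : m ≤ s.card := (Nat.pow_le_pow_iff_right (by norm_num)).mp hle
    exact ⟨m + 1, by omega, hcard⟩
  · have hC1 : C = {one n} := eq_singleton_of_neg_one_not_mem h1 hm hneg
    exact ⟨0, by omega, by rw [hC1]; simp⟩

end Q

/-- Every subloop of `Q n` has order `2^m` for some `m ≤ n+1`; more generally, any `k`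
elements of a Cayley-Dickson loop generate a subloop of size `2^j` with `j ≤ k+1`. -/
theorem Q.subloop_card_pow_two (n : ℕ) :
    (∀ S : Q.Subloop n, ∃ m ≤ n + 1, S.carrier.ncard = 2 ^ m) ∧
    (∀ s : Finset (Q n), ∃ j ≤ s.card + 1, (Q.closure n ↑s).ncard = 2 ^ j) := by
  constructor
  · intro S
    have h1 : one n ∈ S.carrier := S.one_mem
    have hm : ∀ x ∈ S.carrier, ∀ y ∈ S.carrier, mul n x y ∈ S.carrier :=
      fun x hx y hy => S.mul_mem hx hy
    by_cases hneg : neg n (one n) ∈ S.carrier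
    · obtain ⟨m, hmn, hm2⟩ := ncard_image_pow h1 hm
      refine ⟨m + 1, by omega, ?_⟩
      rw [ncard_eq_two_mul h1 hm hneg, hm2, pow_succ, mul_comm]
    · have hS : S.carrier = {one n} := eq_singleton_of_neg_one_not_mem h1 hm hneg
      exact ⟨0, by omega, by rw [hS]; simp⟩
  · exact closure_ncard n
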